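/- Let r > 0 and suppose w is a ℂ-valued function defined for all z ∈ ℂ with 0 < |z| < r, satisfying z·w(z)³ − w(z)² − z·w(z) + 1/3 = 0 for all such z, and suppose |w(z)| → ∞ as z → 0 with z ≠ 0. Then z·w(z) → 1 as z → 0 with z ≠ 0. -/

import Mathlib

open Filter

theorem psiQ_pole_at_origin (r : ℝ) (hr : 0 < r) (w : ℂ → ℂ)
    (hcubic : ∀ z : ℂ, 0 < ‖z‖ → ‖z‖ < r →
      z * w z ^ 3 - w z ^ 2 - z * w z + 1 / 3 = 0)
    (hlim : Tendsto (fun z : ℂ => ‖w z‖) (nhdsWithin 0 {(0 : ℂ)}ᶜ) atTop) :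
    Tendsto (fun z : ℂ => z * w z) (nhdsWithin 0 {(0 : ℂ)}ᶜ) (nhds 1) := by
  set L := nhdsWithin (0 : ℂ) {(0 : ℂ)}ᶜ
  have hwcob : Tendsto w L (Bornology.cobounded ℂ) := by
    rw [← tendsto_norm_atTop_iff_cobounded]
    exact hlim
  have hinv : Tendsto (fun z => (w z)⁻¹) L (nhds 0) :=
    tendsto_inv₀_cobounded.comp hwcob
  have hz : Tendsto (fun z : ℂ => z) L (nhds 0) :=
    tendsto_id.mono_left nhdsWithin_le_nhds
  have key : Tendsto (fun z => 1 + z * (w z)⁻¹ - (1/3) * ((w z)⁻¹)^2) L (nhds 1) := by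
    have h1 : Tendsto (fun _ : ℂ => (1:ℂ)) L (nhds 1) := tendsto_const_nhds
    have h2 : Tendsto (fun _ : ℂ => (1/3:ℂ)) L (nhds (1/3)) := tendsto_const_nhds
    have := (h1.add (hz.mul hinv)).sub (h2.mul (hinv.pow 2))
    simpa using this
  refine key.congr' ?_
  have hne : ∀ᶠ z in L, w z ≠ 0 := by
    filter_upwards [hlim.eventually_gt_atTop 0] with z hz'
    intro h; simp [h] at hz'
  have hz0 : ∀ᶠ z in L, z ≠ 0 := eventually_mem_nhdsWithin
  have hzr : ∀ᶠ z in L, ‖z‖ < r := by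
    have : ∀ᶠ z in nhds (0 : ℂ), ‖z‖ < r := by
      have := Metric.ball_mem_nhds (0 : ℂ) hr
      filter_upwards [this] with z hz'
      simpa [Complex.dist_eq] using hz'
    exact eventually_nhdsWithin_of_eventually_nhds this
  filter_upwards [hne, hz0, hzr] with z hw hz0 hzr
  have hc := hcubic z (by simpa [norm_pos_iff] using hz0) hzr
  field_simp
  ring_nf
  linear_combination (-3) * hc
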